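/- arXiv:2106.01213 — 7 statements merged into one kernel-verified Lean document; each statement's English description precedes it below -/
import Mathlib

section
/- Let m ≥ n be natural numbers and let χ_{a,b} (for 0 ≤ a ≤ m, 0 ≤ b ≤ n) be complex numbers. Suppose (i) χ_{a,b} = 0 whenever a + b ≤ m − 1, and (ii) for every complex number B and all indices with 0 ≤ a ≤ m − 1 and 1 ≤ b ≤ n one has (a+1)·B·χ_{a,b} + b·conj(B)·χ_{a+1,b−1} = 0. Then χ_{a,b} = 0 for every pair (a,b) ≠ (m,n). -/
/-- Invariance of a totally symmetrized spinor of valence (m,n) under the full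
two-parameter group of null rotations forces all components except χ_{m,n} to vanish. -/
theorem null_rotation_invariant_spinor_components_vanish
    (m n : ℕ) (hmn : n ≤ m) (χ : ℕ → ℕ → ℂ)
    (h1 : ∀ a b : ℕ, a ≤ m → b ≤ n → a + b ≤ m - 1 → χ a b = 0)
    (h2 : ∀ B : ℂ, ∀ a b : ℕ, a ≤ m - 1 → 1 ≤ b → b ≤ n →
      ((a : ℂ) + 1) * B * χ a b + (b : ℂ) * (starRingEnd ℂ) B * χ (a + 1) (b - 1) = 0) :
    ∀ a b : ℕ, a ≤ m → b ≤ n → (a, b) ≠ (m, n) → χ a b = 0 := by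
  have key : ∀ a b : ℕ, a ≤ m - 1 → 1 ≤ b → b ≤ n →
      χ a b = 0 ∧ χ (a + 1) (b - 1) = 0 := by
    intro a b ha hb1 hbn
    have e1 := h2 1 a b ha hb1 hbn
    have e2 := h2 Complex.I a b ha hb1 hbn
    simp only [map_one, mul_one, Complex.conj_I] at e1 e2
    have hA : ((a : ℂ) + 1) ≠ 0 := by
      exact Nat.cast_add_one_ne_zero a
    have hB : ((b : ℂ)) ≠ 0 := by
      exact_mod_cast Nat.cast_ne_zero.mpr (by omega)
    have hx : χ a b = 0 := by
      have hAx : ((a : ℂ) + 1) * χ a b = 0 := by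
        linear_combination (1/2) * e1 - (Complex.I/2) * e2 +
          (((a : ℂ) + 1) * χ a b / 2 - (b : ℂ) * χ (a + 1) (b - 1) / 2) * Complex.I_sq
      exact (mul_eq_zero.mp hAx).resolve_left hA
    have hy : χ (a + 1) (b - 1) = 0 := by
      have hBy : (b : ℂ) * χ (a + 1) (b - 1) = 0 := by
        linear_combination e1 - ((a : ℂ) + 1) * hx
      exact (mul_eq_zero.mp hBy).resolve_left hB
    exact ⟨hx, hy⟩
  intro a b ha hb hne
  rcases lt_or_eq_of_le ha with ha' | rfl
  · -- a < m
    rcases Nat.eq_zero_or_pos b with rfl | hb1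
    · exact h1 a 0 ha hb (by omega)
    · exact (key a b (by omega) hb1 hb).1
  · -- a = m, so b < n
    have hbn : b < n := by
      rcases lt_or_eq_of_le hb with h | rfl
      · exact h
      · exact absurd rfl hne
    have hm1 : 1 ≤ a := by omega
    have := (key (a - 1) (b + 1) (by omega) (by omega) (by omega)).2
    simpa [Nat.sub_add_cancel hm1] using this
end

section
/- Let κ, ρ, σ, ε, β, π, δΛ, ΔΛ, δΦ12 be complex numbers and Φ12 a nonzero real number. Suppose δΛ, ΔΛ and δΦ12 are real, and the following equations hold: κ·Φ12 = 0; δΛ = (conj(ρ) − ε)·Φ12; δΛ = ρ·Φ12; 3·δΛ = (conj(ρ) + σ + 2ρ − 2·conj(ε))·Φ12; and 2·ΔΛ − δΦ12 = 2·(π + conj(π) + β)·Φ12. Then κ = 0, ρ is real, ε = 0, σ = 0, and β is real. -/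
/-- Bianchi identities in Segre type [(1,3)]: κ = 0, ρ real, ε = 0, σ = 0, β real. -/
theorem segre13_bianchi_consequences
    (κ ρ σ ε β π δΛ ΔΛ δΦ12 : ℂ) (Φ12 : ℝ) (hΦ : Φ12 ≠ 0)
    (hδΛ : (starRingEnd ℂ) δΛ = δΛ) (hΔΛ : (starRingEnd ℂ) ΔΛ = ΔΛ)
    (hδΦ : (starRingEnd ℂ) δΦ12 = δΦ12)
    (e1 : κ * (Φ12 : ℂ) = 0)
    (e2 : δΛ = ((starRingEnd ℂ) ρ - ε) * (Φ12 : ℂ))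
    (e3 : δΛ = ρ * (Φ12 : ℂ))
    (e4 : 3 * δΛ = ((starRingEnd ℂ) ρ + σ + 2 * ρ - 2 * (starRingEnd ℂ) ε) * (Φ12 : ℂ))
    (e5 : 2 * ΔΛ - δΦ12 = 2 * (π + (starRingEnd ℂ) π + β) * (Φ12 : ℂ)) :
    κ = 0 ∧ (starRingEnd ℂ) ρ = ρ ∧ ε = 0 ∧ σ = 0 ∧ (starRingEnd ℂ) β = β := by
  have hΦC : (Φ12 : ℂ) ≠ 0 := by exact_mod_cast hΦ
  have hκ : κ = 0 := by
    rcases mul_eq_zero.mp e1 with h | h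
    · exact h
    · exact absurd h hΦC
  have e3' : δΛ = (starRingEnd ℂ) ρ * (Φ12 : ℂ) := by
    have := congrArg (starRingEnd ℂ) e3
    simpa [hδΛ, Complex.conj_ofReal] using this
  have hρ : (starRingEnd ℂ) ρ = ρ :=
    mul_right_cancel₀ hΦC (e3'.symm.trans e3)
  have hε : ε = 0 := by
    have h := mul_right_cancel₀ hΦC (e2.symm.trans e3)
    rw [hρ] at h
    linear_combination -h
  have hε' : (starRingEnd ℂ) ε = 0 := by simp [hε]
  have hσ : σ = 0 := by
    have h4 : (3 * ρ) * (Φ12 : ℂ) = ((starRingEnd ℂ) ρ + σ + 2 * ρ - 2 * (starRingEnd ℂ) ε) * (Φ12 : ℂ) := by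
      rw [mul_assoc, ← e3]; exact e4
    have h := mul_right_cancel₀ hΦC h4
    rw [hρ, hε'] at h
    linear_combination -h
  have hβ : (starRingEnd ℂ) β = β := by
    have h5 := congrArg (starRingEnd ℂ) e5
    simp only [map_sub, map_mul, map_add, map_ofNat, hΔΛ, hδΦ, Complex.conj_ofReal,
      RingHomCompTriple.comp_apply, RingHom.id_apply] at h5
    have : (2 : ℂ) * ((starRingEnd ℂ) π + π + (starRingEnd ℂ) β) * (Φ12 : ℂ)
        = 2 * (π + (starRingEnd ℂ) π + β) * (Φ12 : ℂ) := by
      rw [← h5]; exact e5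
    have h := mul_right_cancel₀ hΦC this
    linear_combination h / 2
  exact ⟨hκ, hρ, hε, hσ, hβ⟩
end

section
/- Let α, β, τ, π, δΦ12, ΔΛ be complex numbers and Φ12 a nonzero real number, with β real. Suppose the following equations hold: δΦ12 = 2·(conj(τ) − α)·Φ12; 2·ΔΛ − δΦ12 = 2·(π + conj(π) + β)·Φ12; and 3·ΔΛ − 2·δΦ12 = (2·(β + conj(β) + π + conj(π)) − τ − conj(τ))·Φ12. Then α + τ + (π + conj(π)) = β. -/
/-- Bianchi identities (Bc), (Bf), (Bk) in Segre type [(1,3)] imply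
α + τ + (π + conj π) = β. -/
theorem segre13_abtp_identity
    (α β τ π δΦ12 ΔΛ : ℂ) (Φ12 : ℝ) (hΦ : Φ12 ≠ 0)
    (hβ : (starRingEnd ℂ) β = β)
    (e1 : δΦ12 = 2 * ((starRingEnd ℂ) τ - α) * (Φ12 : ℂ))
    (e2 : 2 * ΔΛ - δΦ12 = 2 * (π + (starRingEnd ℂ) π + β) * (Φ12 : ℂ))
    (e3 : 3 * ΔΛ - 2 * δΦ12 =
      (2 * (β + (starRingEnd ℂ) β + π + (starRingEnd ℂ) π) - τ - (starRingEnd ℂ) τ) * (Φ12 : ℂ)) :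
    α + τ + (π + (starRingEnd ℂ) π) = β := by
  have hΦ' : (Φ12 : ℂ) ≠ 0 := by exact_mod_cast hΦ
  have h : (α + τ + (π + (starRingEnd ℂ) π) - β) * (2 * (Φ12 : ℂ)) = 0 := by
    linear_combination e1 - 3 * e2 + 2 * e3 + 4 * (Φ12 : ℂ) * hβ
  rcases mul_eq_zero.mp h with h' | h'
  · exact sub_eq_zero.mp h'
  · exact absurd h' (by simpa using hΦ')
end

section
/- Let κ, ρ, σ, ε, α, β, τ, π, δΦ11, δΛ be complex numbers, Φ11 a nonzero real number and Φ22 a nonzero real number. Suppose δΦ11 and δΛ are real, and the following equations hold: (κ + conj(κ))·Φ11 = 0; (ε − conj(ε))·Φ11 = 0; (ρ + conj(σ))·Φ11 = 0; 2·δΦ11 − 2·δΛ = 2·(2·(α − conj(β)) + (τ + conj(τ)))·Φ11; and −3·δΦ11 + 3·δΛ = 2·(−2α + 2·conj(β) + π + conj(π) − τ − conj(τ))·Φ11 − κ·Φ22. Then ε is real, ρ + conj(σ) = 0, α − conj(β) is real, and κ = 0. -/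
/-- Bianchi identities in Segre type [1(1,2)]: ε real, ρ + conj σ = 0,
α − conj β real, κ = 0. -/
theorem segre112_bianchi_consequences
    (κ ρ σ ε α β τ π δΦ11 δΛ : ℂ) (Φ11 Φ22 : ℝ)
    (hΦ11 : Φ11 ≠ 0) (hΦ22 : Φ22 ≠ 0)
    (hδΦ : (starRingEnd ℂ) δΦ11 = δΦ11) (hδΛ : (starRingEnd ℂ) δΛ = δΛ)
    (e1 : (κ + (starRingEnd ℂ) κ) * (Φ11 : ℂ) = 0)
    (e2 : (ε - (starRingEnd ℂ) ε) * (Φ11 : ℂ) = 0)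
    (e3 : (ρ + (starRingEnd ℂ) σ) * (Φ11 : ℂ) = 0)
    (e4 : 2 * δΦ11 - 2 * δΛ =
      2 * (2 * (α - (starRingEnd ℂ) β) + (τ + (starRingEnd ℂ) τ)) * (Φ11 : ℂ))
    (e5 : -3 * δΦ11 + 3 * δΛ =
      2 * (-2 * α + 2 * (starRingEnd ℂ) β + π + (starRingEnd ℂ) π - τ - (starRingEnd ℂ) τ) * (Φ11 : ℂ)
        - κ * (Φ22 : ℂ)) :
    (starRingEnd ℂ) ε = ε ∧ ρ + (starRingEnd ℂ) σ = 0 ∧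
      (starRingEnd ℂ) (α - (starRingEnd ℂ) β) = α - (starRingEnd ℂ) β ∧ κ = 0 := by
  have hΦ : (Φ11 : ℂ) ≠ 0 := by exact_mod_cast hΦ11
  have hΨ : (Φ22 : ℂ) ≠ 0 := by exact_mod_cast hΦ22
  have h1 : κ + (starRingEnd ℂ) κ = 0 := by
    rcases mul_eq_zero.mp e1 with h | h
    · exact h
    · exact absurd h hΦ
  have hε : (starRingEnd ℂ) ε = ε := by
    rcases mul_eq_zero.mp e2 with h | h
    · linear_combination -h
    · exact absurd h hΦ
  have hρσ : ρ + (starRingEnd ℂ) σ = 0 := by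
    rcases mul_eq_zero.mp e3 with h | h
    · exact h
    · exact absurd h hΦ
  have e4' := congrArg (starRingEnd ℂ) e4
  have e5' := congrArg (starRingEnd ℂ) e5
  simp only [map_mul, map_add, map_sub, map_neg, map_ofNat, Complex.conj_ofReal,
    Complex.conj_conj, hδΦ, hδΛ] at e4' e5'
  have hα : (starRingEnd ℂ) (α - (starRingEnd ℂ) β) = α - (starRingEnd ℂ) β := by
    have h0 : ((starRingEnd ℂ) α - β - (α - (starRingEnd ℂ) β)) * (Φ11 : ℂ) = 0 := by
      linear_combination (e4 - e4') / 4
    rcases mul_eq_zero.mp h0 with h | h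
    · simpa [map_sub, Complex.conj_conj, sub_eq_zero] using sub_eq_zero.mp h
    · exact absurd h hΦ
  have hκr : (starRingEnd ℂ) κ = κ := by
    have h0 : ((starRingEnd ℂ) κ - κ) * (Φ22 : ℂ) = 0 := by
      have hα' : (starRingEnd ℂ) α - β = α - (starRingEnd ℂ) β := by
        simpa [map_sub, Complex.conj_conj] using hα
      linear_combination e5' - e5 - 4 * (Φ11 : ℂ) * hα'
    rcases mul_eq_zero.mp h0 with h | h
    · exact sub_eq_zero.mp h
    · exact absurd h hΨ
  have hκ : κ = 0 := by linear_combination (h1 - hκr) / 2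
  exact ⟨hε, hρσ, hα, hκ⟩
end

section
/- Let α, β, τ, π, δΦ11, δΛ be complex numbers and Φ11 a nonzero real number, with α − conj(β) real. Suppose the following equations hold: 2·δΦ11 − 2·δΛ = 2·(2·(conj(α) − β) − (π + conj(π)))·Φ11; 2·δΦ11 − 2·δΛ = 2·(2·(α − conj(β)) + (τ + conj(τ)))·Φ11; and −3·δΦ11 + 3·δΛ = 2·(−2·(α − conj(β)) + (π + conj(π)) − (τ + conj(τ)))·Φ11. Then (τ + conj(τ)) + (π + conj(π)) = 0, (π + conj(π)) + 2·(α − conj(β)) = 0, and α + conj(α) = (β + conj(β)) + (τ + conj(τ)). -/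
/-- Bianchi identities (Bg), (Bh), (Bj) in Segre type [1(1,2)] with κ = 0, Φ12 = 0. -/
theorem segre112_ptident_lmcond_abpident
    (α β τ π δΦ11 δΛ : ℂ) (Φ11 : ℝ) (hΦ : Φ11 ≠ 0)
    (hab : (starRingEnd ℂ) (α - (starRingEnd ℂ) β) = α - (starRingEnd ℂ) β)
    (e1 : 2 * δΦ11 - 2 * δΛ =
      2 * (2 * ((starRingEnd ℂ) α - β) - (π + (starRingEnd ℂ) π)) * (Φ11 : ℂ))
    (e2 : 2 * δΦ11 - 2 * δΛ =
      2 * (2 * (α - (starRingEnd ℂ) β) + (τ + (starRingEnd ℂ) τ)) * (Φ11 : ℂ))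
    (e3 : -3 * δΦ11 + 3 * δΛ =
      2 * (-2 * (α - (starRingEnd ℂ) β) + (π + (starRingEnd ℂ) π) - (τ + (starRingEnd ℂ) τ)) * (Φ11 : ℂ)) :
    (τ + (starRingEnd ℂ) τ) + (π + (starRingEnd ℂ) π) = 0 ∧
      (π + (starRingEnd ℂ) π) + 2 * (α - (starRingEnd ℂ) β) = 0 ∧
      α + (starRingEnd ℂ) α = (β + (starRingEnd ℂ) β) + (τ + (starRingEnd ℂ) τ) := by
  have hΦ' : (Φ11 : ℂ) ≠ 0 := by exact_mod_cast hΦ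
  have hA : (starRingEnd ℂ) α - β = α - (starRingEnd ℂ) β := by
    simpa [map_sub] using hab
  rw [hA] at e1
  refine ⟨?_, ?_, ?_⟩
  · have h : ((τ + (starRingEnd ℂ) τ) + (π + (starRingEnd ℂ) π)) * (Φ11 : ℂ) = 0 := by
      linear_combination (e1 - e2) / 2
    exact (mul_eq_zero.mp h).resolve_right hΦ'
  · have h : ((π + (starRingEnd ℂ) π) + 2 * (α - (starRingEnd ℂ) β)) * (Φ11 : ℂ) = 0 := by
      linear_combination -(2*e3 + e1 + 2*e2) / 2
    exact (mul_eq_zero.mp h).resolve_right hΦ'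
  · have h : (α + (starRingEnd ℂ) α - ((β + (starRingEnd ℂ) β) + (τ + (starRingEnd ℂ) τ))) * (Φ11 : ℂ) = 0 := by
      linear_combination (Φ11 : ℂ) * hA - (2*e3 + e1 + 2*e2) / 2 + (e2 - e1) / 2
    have := (mul_eq_zero.mp h).resolve_right hΦ'
    linear_combination this
end

section
/- Let κ, ρ, ε, δΛ, ΔΛ be complex numbers and Φ22 a nonzero real number. Suppose the following equations hold: −2·δΛ = conj(κ)·Φ22; −2·δΛ = 0; 2·ΔΛ = (conj(ρ) − 2ε − 2·conj(ε))·Φ22; and 3·ΔΛ = (ρ + conj(ρ) − 2ε − 2·conj(ε))·Φ22. Then δΛ = 0, κ = 0, ρ is real, ρ = −2·(ε + conj(ε)), and ΔΛ = ρ·Φ22. -/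
/-- Bianchi identities (Bg), (Bh), (Bf), (Bk) in Segre type [(11,2)]: δΛ = 0, κ = 0,
ρ real, ρ = −2(ε + conj ε), ΔΛ = ρΦ22. -/
theorem segre112rad_bianchi_consequences
    (κ ρ ε δΛ ΔΛ : ℂ) (Φ22 : ℝ) (hΦ : Φ22 ≠ 0)
    (e1 : -2 * δΛ = (starRingEnd ℂ) κ * (Φ22 : ℂ))
    (e2 : -2 * δΛ = 0)
    (e3 : 2 * ΔΛ = ((starRingEnd ℂ) ρ - 2 * ε - 2 * (starRingEnd ℂ) ε) * (Φ22 : ℂ))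
    (e4 : 3 * ΔΛ = (ρ + (starRingEnd ℂ) ρ - 2 * ε - 2 * (starRingEnd ℂ) ε) * (Φ22 : ℂ)) :
    δΛ = 0 ∧ κ = 0 ∧ (starRingEnd ℂ) ρ = ρ ∧ ρ = -2 * (ε + (starRingEnd ℂ) ε) ∧
      ΔΛ = ρ * (Φ22 : ℂ) := by
  have hΦC : (Φ22 : ℂ) ≠ 0 := by exact_mod_cast hΦ
  have hδ : δΛ = 0 := by linear_combination (-1/2 : ℂ) * e2
  have hκ : κ = 0 := by
    have h : (starRingEnd ℂ) κ * (Φ22 : ℂ) = 0 := by linear_combination -e1 + e2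
    rcases mul_eq_zero.mp h with h' | h'
    · exact star_eq_zero.mp h'
    · exact absurd h' hΦC
  have hA : ((starRingEnd ℂ) ρ - 2 * ρ - 2 * ε - 2 * (starRingEnd ℂ) ε) * (Φ22 : ℂ) = 0 := by
    linear_combination 2 * e4 - 3 * e3
  have hA0 : (starRingEnd ℂ) ρ - 2 * ρ - 2 * ε - 2 * (starRingEnd ℂ) ε = 0 :=
    (mul_eq_zero.mp hA).resolve_right hΦC
  have hB0 : ρ - 2 * (starRingEnd ℂ) ρ - 2 * (starRingEnd ℂ) ε - 2 * ε = 0 := by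
    have := congrArg (starRingEnd ℂ) hA0
    simpa [map_ofNat] using this
  have hρ : (starRingEnd ℂ) ρ = ρ := by linear_combination (1/3 : ℂ) * hA0 - (1/3 : ℂ) * hB0
  refine ⟨hδ, hκ, hρ, ?_, ?_⟩
  · linear_combination -hA0 + hρ
  · linear_combination e4 - e3
end

section
/- Let ρ, σ, γ, λ, μ, ΔΦ11, ΔΛ be complex numbers, ε a real number, and Φ11, Φ22 nonzero real numbers. Suppose ρ + conj(σ) = 0, ΔΦ11 and ΔΛ are real, and the following equations hold: −2·ΔΦ11 = 2·(2·γ − 2·conj(γ) + conj(μ) + λ)·Φ11 − conj(σ)·Φ22; 2·ΔΛ = −2·(μ + conj(λ))·Φ11 + (conj(ρ) − 4·ε)·Φ22; and 3·ΔΛ + ΔΦ11 = (ρ + conj(ρ) − 4·ε)·Φ22 − 2·(μ + conj(μ) + λ + conj(λ))·Φ11. Then ρ + conj(ρ) + 4·ε = 0. -/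
/-- Bianchi identities (Bc), (Bf), (Bk) for a conformally flat Segre type [1(1,2)]
spacetime: ρ + conj ρ + 4ε = 0. -/
theorem cf_segre112_rho_eps_relation
    (ρ σ γ lam μ ΔΦ11 ΔΛ : ℂ) (ε : ℝ) (Φ11 Φ22 : ℝ)
    (hΦ11 : Φ11 ≠ 0) (hΦ22 : Φ22 ≠ 0)
    (hρσ : ρ + (starRingEnd ℂ) σ = 0)
    (hΔΦ : (starRingEnd ℂ) ΔΦ11 = ΔΦ11) (hΔΛ : (starRingEnd ℂ) ΔΛ = ΔΛ)
    (e1 : -2 * ΔΦ11 =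
      2 * (2 * γ - 2 * (starRingEnd ℂ) γ + (starRingEnd ℂ) μ + lam) * (Φ11 : ℂ)
        - (starRingEnd ℂ) σ * (Φ22 : ℂ))
    (e2 : 2 * ΔΛ = -2 * (μ + (starRingEnd ℂ) lam) * (Φ11 : ℂ)
        + ((starRingEnd ℂ) ρ - 4 * (ε : ℂ)) * (Φ22 : ℂ))
    (e3 : 3 * ΔΛ + ΔΦ11 = (ρ + (starRingEnd ℂ) ρ - 4 * (ε : ℂ)) * (Φ22 : ℂ)
        - 2 * (μ + (starRingEnd ℂ) μ + lam + (starRingEnd ℂ) lam) * (Φ11 : ℂ)) :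
    ρ + (starRingEnd ℂ) ρ + 4 * (ε : ℂ) = 0 := by
  have e1c := congrArg (starRingEnd ℂ) e1
  have e2c := congrArg (starRingEnd ℂ) e2
  have hρσc := congrArg (starRingEnd ℂ) hρσ
  simp only [map_mul, map_add, map_sub, map_neg, map_zero, map_ofNat,
    Complex.conj_ofReal, Complex.conj_conj, hΔΦ, hΔΛ] at e1c e2c hρσc
  have key : (ρ + (starRingEnd ℂ) ρ + 4 * (ε : ℂ)) * (Φ22 : ℂ) = 0 := by
    linear_combination (-1/2 : ℂ) * e1 + (-1/2 : ℂ) * e1c + (-2 : ℂ) * e3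
      + (3/2 : ℂ) * e2 + (3/2 : ℂ) * e2c
      + ((Φ22 : ℂ)/2) * hρσ + ((Φ22 : ℂ)/2) * hρσc
  have h22 : (Φ22 : ℂ) ≠ 0 := by exact_mod_cast hΦ22
  exact (mul_eq_zero.mp key).resolve_right h22
end
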